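/- arXiv:1505.03906 — 2 statements merged into one kernel-verified Lean document; each statement's English description precedes it below -/
import Mathlib

section
/- (McDiarmid's inequality) Let f : X_1 × ⋯ × X_N → ℝ satisfy the bounded differences condition with constants c_1,…,c_N ≥ 0: changing the k-th coordinate changes f by at most c_k. Then for independent random variables ξ_1,…,ξ_N and every ε > 0, P(f(ξ_1,…,ξ_N) − E[f(ξ_1,…,ξ_N)] ≥ ε) ≤ exp(−2ε² / Σ_{n=1}^N c_n²). -/
open Real MeasureTheory ProbabilityTheory

lemma mcd_q_pos {p : ℝ} (hp0 : 0 ≤ p) (hp1 : p ≤ 1) (u : ℝ) :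
    0 < 1 - p + p * Real.exp u := by
  rcases eq_or_lt_of_le hp0 with h | h
  · simp [← h]
  · have := Real.exp_pos u
    nlinarith

lemma mcd_L_le (p : ℝ) (hp0 : 0 ≤ p) (hp1 : p ≤ 1) (u : ℝ) :
    -p * u + Real.log (1 - p + p * Real.exp u) ≤ u ^ 2 / 8 := by
  set q : ℝ → ℝ := fun u => 1 - p + p * Real.exp u with hq
  have hqpos : ∀ u, 0 < q u := fun u => mcd_q_pos hp0 hp1 u
  set D : ℝ → ℝ := fun u => u ^ 2 / 8 - (-p * u + Real.log (q u)) with hD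
  set G : ℝ → ℝ := fun u => u / 4 + p - p * Real.exp u / q u with hG
  have hqd : ∀ u, HasDerivAt q (p * Real.exp u) u := by
    intro u
    exact ((Real.hasDerivAt_exp u).const_mul p).const_add (1 - p)
  have hDd : ∀ u, HasDerivAt D (G u) u := by
    intro u
    have h1 : HasDerivAt (fun u : ℝ => u ^ 2 / 8) (2 * u / 8) u := by
      simpa using ((hasDerivAt_pow 2 u).div_const 8)
    have h2 : HasDerivAt (fun u : ℝ => Real.log (q u)) (p * Real.exp u / q u) u :=
      (hqd u).log (hqpos u).ne'
    have h3 : HasDerivAt (fun u : ℝ => -p * u + Real.log (q u))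
        (-p + p * Real.exp u / q u) u := by
      exact (((hasDerivAt_id' u).const_mul (-p)).add h2).congr_deriv (by ring)
    have h4 := h1.sub h3
    have he : G u = 2 * u / 8 - (-p + p * Real.exp u / q u) := by
      simp only [hG]; ring
    rw [he]; exact h4
  have hGd : ∀ u, HasDerivAt G (1 / 4 - p * Real.exp u * (1 - p) / (q u) ^ 2) u := by
    intro u
    have h1 : HasDerivAt (fun u : ℝ => u / 4 + p) (1 / 4) u := by
      simpa using ((hasDerivAt_id u).div_const 4).add_const p
    have h2 : HasDerivAt (fun u : ℝ => p * Real.exp u / q u)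
        ((p * Real.exp u * q u - p * Real.exp u * (p * Real.exp u)) / (q u) ^ 2) u :=
      ((Real.hasDerivAt_exp u).const_mul p).div (hqd u) (hqpos u).ne'
    have h4 := h1.sub h2
    have he : p * Real.exp u * q u - p * Real.exp u * (p * Real.exp u)
        = p * Real.exp u * (1 - p) := by
      simp only [hq]; ring
    rw [he] at h4
    exact h4
  have hG'nonneg : ∀ u, 0 ≤ 1 / 4 - p * Real.exp u * (1 - p) / (q u) ^ 2 := by
    intro u
    rw [sub_nonneg, div_le_iff₀ (pow_pos (hqpos u) 2)]
    have hquv : q u = 1 - p + p * Real.exp u := rfl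
    rw [hquv]
    nlinarith [sq_nonneg ((1 - p) - p * Real.exp u)]
  have hGmono : Monotone G :=
    monotone_of_deriv_nonneg (fun u => (hGd u).differentiableAt)
      (fun u => by rw [(hGd u).deriv]; exact hG'nonneg u)
  have hG0 : G 0 = 0 := by simp [hG, hq]
  have hD0 : D 0 = 0 := by simp [hD, hq]
  have hDcont : Continuous D := Differentiable.continuous (fun u => (hDd u).differentiableAt)
  have key : ∀ u, 0 ≤ D u := by
    intro u
    rcases le_total 0 u with h | h
    · have hm : MonotoneOn D (Set.Ici 0) := by
        apply monotoneOn_of_deriv_nonneg (convex_Ici 0) hDcont.continuousOn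
          (fun x _ => (hDd x).differentiableAt.differentiableWithinAt)
        intro x hx
        rw [(hDd x).deriv]
        rw [interior_Ici] at hx
        calc (0:ℝ) = G 0 := hG0.symm
        _ ≤ G x := hGmono (le_of_lt hx)
      have := hm Set.self_mem_Ici (Set.mem_Ici.2 h) h
      simpa [hD0] using this
    · have hm : AntitoneOn D (Set.Iic 0) := by
        apply antitoneOn_of_deriv_nonpos (convex_Iic 0) hDcont.continuousOn
          (fun x _ => (hDd x).differentiableAt.differentiableWithinAt)
        intro x hx
        rw [(hDd x).deriv]
        rw [interior_Iic] at hx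
        calc G x ≤ G 0 := hGmono (le_of_lt hx)
        _ = 0 := hG0
      have := hm (Set.mem_Iic.2 h) Set.self_mem_Iic h
      simpa [hD0] using this
  have := key u
  simp only [hD] at this
  linarith
open Real MeasureTheory ProbabilityTheory

lemma mcd_nonempty {α : Type*} [MeasurableSpace α] (ν : Measure α)
    [IsProbabilityMeasure ν] : Nonempty α := by
  by_contra h
  rw [not_nonempty_iff] at h
  have : (Set.univ : Set α) = ∅ := Set.univ_eq_empty_iff.2 h
  have h1 : ν Set.univ = 1 := measure_univ
  rw [this] at h1
  simp at h1

lemma mcd_integrable {α : Type*} [MeasurableSpace α] (ν : Measure α)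
    [IsProbabilityMeasure ν] {u : α → ℝ} (hu : Measurable u) {K : ℝ}
    (hK : ∀ x, |u x| ≤ K) : Integrable u ν := by
  refine (integrable_const K).mono' hu.aestronglyMeasurable ?_
  exact Filter.Eventually.of_forall (fun x => by simpa using hK x)

lemma mcd_hoeffding {α : Type*} [MeasurableSpace α] (ν : Measure α)
    [IsProbabilityMeasure ν] {Y : α → ℝ} (hY : Measurable Y) {a b : ℝ}
    (hab : ∀ x, Y x ∈ Set.Icc a b) (h0 : ∫ x, Y x ∂ν = 0) (t : ℝ) :
    ∫ x, Real.exp (t * Y x) ∂ν ≤ Real.exp (t ^ 2 * (b - a) ^ 2 / 8) := by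
  have hne : Nonempty α := mcd_nonempty ν
  obtain ⟨x₀⟩ := hne
  have hab0 : a ≤ b := le_trans (hab x₀).1 (hab x₀).2
  have hYint : Integrable Y ν :=
    mcd_integrable ν hY (K := max |a| |b|) (fun x => abs_le.2
      ⟨le_trans (neg_le_neg (le_max_left |a| |b|)) (le_trans (neg_abs_le a) (hab x).1),
       le_trans (hab x).2 (le_trans (le_abs_self b) (le_max_right |a| |b|))⟩)
  have ha0 : a ≤ 0 := by
    have : ∫ _x, a ∂ν ≤ ∫ x, Y x ∂ν :=
      integral_mono (integrable_const a) hYint (fun x => (hab x).1)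
    simpa [h0] using this
  have hb0 : 0 ≤ b := by
    have : ∫ x, Y x ∂ν ≤ ∫ _x, b ∂ν :=
      integral_mono hYint (integrable_const b) (fun x => (hab x).2)
    simpa [h0] using this
  rcases eq_or_lt_of_le hab0 with heq | hlt
  · -- a = b forces a = b = 0, Y = 0
    have hYz : ∀ x, Y x = 0 := fun x =>
      le_antisymm (by linarith [(hab x).2]) (by linarith [(hab x).1])
    simp only [hYz, mul_zero, Real.exp_zero]
    rw [integral_const]
    simp only [measure_univ, probReal_univ, ENNReal.toReal_one, smul_eq_mul, one_mul]
    exact Real.one_le_exp (by positivity)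
  · -- main case a < b
    have hba : 0 < b - a := sub_pos.2 hlt
    -- pointwise convexity bound
    have hpt : ∀ x, Real.exp (t * Y x) ≤
        ((b - Y x) * Real.exp (t * a) + (Y x - a) * Real.exp (t * b)) / (b - a) := by
      intro x
      obtain ⟨h1, h2⟩ := hab x
      set θ : ℝ := (b - Y x) / (b - a) with hθ
      have hθ0 : 0 ≤ θ := div_nonneg (by linarith) (by linarith)
      have hθ1 : 0 ≤ 1 - θ := by
        rw [hθ, sub_nonneg, div_le_one hba]; linarith
      have hsum : θ + (1 - θ) = 1 := by ring
      have hconv := convexOn_exp.2 (Set.mem_univ (t * a)) (Set.mem_univ (t * b))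
        hθ0 hθ1 hsum
      have h1θ : 1 - θ = (Y x - a) / (b - a) := by
        rw [hθ]; field_simp; ring
      have harg : θ * (t * a) + (1 - θ) * (t * b) = t * Y x := by
        rw [hθ, h1θ]; field_simp; ring
      simp only [smul_eq_mul] at hconv
      rw [harg] at hconv
      calc Real.exp (t * Y x) ≤ θ * Real.exp (t * a) + (1 - θ) * Real.exp (t * b) := hconv
      _ = ((b - Y x) * Real.exp (t * a) + (Y x - a) * Real.exp (t * b)) / (b - a) := by
            rw [hθ, h1θ]; ring
    -- integrate
    have hint1 : Integrable (fun x => Real.exp (t * Y x)) ν :=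
      mcd_integrable ν (Real.measurable_exp.comp (hY.const_mul t))
        (K := Real.exp (|t| * max |a| |b|)) (fun x => by
          rw [abs_of_pos (Real.exp_pos _)]
          apply Real.exp_le_exp.2
          calc t * Y x ≤ |t * Y x| := le_abs_self _
          _ = |t| * |Y x| := abs_mul t (Y x)
          _ ≤ |t| * max |a| |b| := by
              apply mul_le_mul_of_nonneg_left _ (abs_nonneg t)
              rw [abs_le]
              constructor
              · exact le_trans (neg_le_neg (le_max_left |a| |b|))
                  (le_trans (neg_abs_le a) (hab x).1)
              · exact le_trans (hab x).2 (le_trans (le_abs_self b) (le_max_right |a| |b|)))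
    have hint2 : Integrable (fun x =>
        ((b - Y x) * Real.exp (t * a) + (Y x - a) * Real.exp (t * b)) / (b - a)) ν := by
      apply Integrable.div_const
      exact (((integrable_const b).sub hYint).mul_const _).add
        ((hYint.sub (integrable_const a)).mul_const _)
    have hInt : ∫ x, Real.exp (t * Y x) ∂ν ≤
        (b * Real.exp (t * a) - a * Real.exp (t * b)) / (b - a) := by
      calc ∫ x, Real.exp (t * Y x) ∂ν
          ≤ ∫ x, ((b - Y x) * Real.exp (t * a) + (Y x - a) * Real.exp (t * b)) / (b - a) ∂ν :=
            integral_mono hint1 hint2 hpt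
      _ = (b * Real.exp (t * a) - a * Real.exp (t * b)) / (b - a) := by
            have e1 : Integrable (fun x => (b - Y x) * Real.exp (t * a)) ν := by
              exact ((integrable_const b).sub hYint).mul_const _
            have e2 : Integrable (fun x => (Y x - a) * Real.exp (t * b)) ν := by
              exact (hYint.sub (integrable_const a)).mul_const _
            rw [integral_div]
            congr 1
            rw [integral_add e1 e2, integral_mul_const, integral_mul_const,
              integral_sub (integrable_const b) hYint,
              integral_sub hYint (integrable_const a), h0, integral_const, integral_const]
            simp
            ring
    -- identify RHS with exp(L)
    set p : ℝ := -a / (b - a) with hp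
    have hp0 : 0 ≤ p := div_nonneg (by linarith) (by linarith)
    have hp1 : p ≤ 1 := by rw [hp, div_le_one hba]; linarith
    set u : ℝ := t * (b - a) with hu
    have hqpos := mcd_q_pos hp0 hp1 u
    have h3 : Real.exp (t * a) * Real.exp (t * (b - a)) = Real.exp (t * b) := by
      rw [← Real.exp_add]; congr 1; ring
    have hiden : (b * Real.exp (t * a) - a * Real.exp (t * b)) / (b - a)
        = Real.exp (-p * u + Real.log (1 - p + p * Real.exp u)) := by
      rw [Real.exp_add, Real.exp_log hqpos]
      have h1 : Real.exp (-p * u) = Real.exp (t * a) := by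
        congr 1
        rw [hp, hu]; field_simp
      have h2 : 1 - p + p * Real.exp u = (b - a * Real.exp u) / (b - a) := by
        rw [hp]; field_simp; ring
      rw [h1, h2, ← mul_div_assoc]
      congr 1
      rw [hu]
      linear_combination a * h3
    calc ∫ x, Real.exp (t * Y x) ∂ν
        ≤ (b * Real.exp (t * a) - a * Real.exp (t * b)) / (b - a) := hInt
    _ = Real.exp (-p * u + Real.log (1 - p + p * Real.exp u)) := hiden
    _ ≤ Real.exp (u ^ 2 / 8) := Real.exp_le_exp.2 (mcd_L_le p hp0 hp1 u)
    _ = Real.exp (t ^ 2 * (b - a) ^ 2 / 8) := by rw [hu]; ring_nf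
lemma mcd_insertNth_update {n : ℕ} {α : Fin (n + 1) → Type*} (p : Fin (n + 1)) (x : α p)
    (f : ∀ i, α (p.succAbove i)) (j : Fin n) (v : α (p.succAbove j)) :
    Function.update (p.insertNth x f) (p.succAbove j) v
      = p.insertNth x (Function.update f j v) := by
  ext i
  cases i using p.succAboveCases with
  | x =>
      rw [Function.update_of_ne (Fin.succAbove_ne p j).symm]
      simp
  | p k =>
      rcases eq_or_ne k j with rfl | hne
      · simp
      · rw [Function.update_of_ne (fun h => hne (Fin.succAbove_right_injective h)),
          Fin.insertNth_apply_succAbove, Fin.insertNth_apply_succAbove,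
          Function.update_of_ne hne]

lemma mcd_abs_integral {α : Type*} [MeasurableSpace α] (ν : MeasureTheory.Measure α) (u : α → ℝ) :
    |∫ x, u x ∂ν| ≤ ∫ x, |u x| ∂ν := by
  simpa [Real.norm_eq_abs] using MeasureTheory.norm_integral_le_integral_norm (μ := ν) u

universe u in
lemma mcd_mgf_pi : ∀ (N : ℕ) (𝒳 : Fin N → Type u) (m𝒳 : ∀ i, MeasurableSpace (𝒳 i))
    (ν : ∀ i, Measure (𝒳 i)) (_hν : ∀ i, IsProbabilityMeasure (ν i))
    (f : (∀ i, 𝒳 i) → ℝ) (_hf : Measurable f) (B : ℝ) (_hB : ∀ x, |f x| ≤ B)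
    (c : Fin N → ℝ)
    (_hbd : ∀ (i : Fin N) (x : ∀ j, 𝒳 j) (x' : 𝒳 i),
      |f x - f (Function.update x i x')| ≤ c i)
    (t : ℝ),
    ∫ x, Real.exp (t * (f x - ∫ y, f y ∂Measure.pi ν)) ∂Measure.pi ν
      ≤ Real.exp (t ^ 2 * (∑ i, c i ^ 2) / 8) := by
  intro N
  induction N with
  | zero =>
      intro 𝒳 m𝒳 ν hν f hf B hB c hbd t
      haveI := hν
      haveI : IsProbabilityMeasure (Measure.pi ν) := by infer_instance
      have hsub : Subsingleton (∀ i, 𝒳 i) := ⟨fun a b => funext fun i => i.elim0⟩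
      let x₀ : ∀ i : Fin 0, 𝒳 i := fun i => i.elim0
      have hconst : ∀ x, f x = f x₀ := fun x => congrArg f (hsub.elim x x₀)
      have hm : ∫ y, f y ∂Measure.pi ν = f x₀ := by
        rw [show (fun y => f y) = (fun _ => f x₀) from funext hconst]
        simp
      calc ∫ x, Real.exp (t * (f x - ∫ y, f y ∂Measure.pi ν)) ∂Measure.pi ν
          = ∫ _x, (1:ℝ) ∂Measure.pi ν := by
            congr 1
            funext x
            rw [hm, hconst x]
            simp
      _ = 1 := by simp
      _ ≤ Real.exp (t ^ 2 * (∑ i, c i ^ 2) / 8) := by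
            simp
  | succ N IH =>
      intro 𝒳 m𝒳 ν hν f hf B hB c hbd t
      haveI := hν
      haveI : ∀ i, Nonempty (𝒳 i) := fun i => mcd_nonempty (ν i)
      set Ppi := Measure.pi ν with hPpi
      haveI : IsProbabilityMeasure Ppi := by infer_instance
      set ν' := fun j : Fin N => ν ((0 : Fin (N + 1)).succAbove j) with hν'
      set Ppi' := Measure.pi ν' with hPpi'
      haveI : ∀ j, IsProbabilityMeasure (ν' j) := fun j => hν _
      haveI : IsProbabilityMeasure Ppi' := by infer_instance
      haveI : IsProbabilityMeasure ((ν 0).prod Ppi') := by infer_instance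
      set F : 𝒳 0 × (∀ j, 𝒳 ((0 : Fin (N + 1)).succAbove j)) → ℝ :=
        fun z => f ((0 : Fin (N + 1)).insertNth z.1 z.2) with hF
      have hFmeas : Measurable F := by
        have : F = f ∘ (MeasurableEquiv.piFinSuccAbove 𝒳 0).symm := rfl
        rw [this]
        exact hf.comp (MeasurableEquiv.piFinSuccAbove 𝒳 0).symm.measurable
      have hFB : ∀ z, |F z| ≤ B := fun z => hB _
      have hmp := measurePreserving_piFinSuccAbove ν 0
      set m := ∫ y, f y ∂Ppi with hmdef
      have hmB : |m| ≤ B := by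
        calc |m| ≤ ∫ y, |f y| ∂Ppi := mcd_abs_integral _ _
        _ ≤ ∫ _y, B ∂Ppi := integral_mono
              (mcd_integrable Ppi hf.abs (fun x => by rw [abs_abs]; exact hB x))
              (integrable_const B) (fun y => hB y)
        _ = B := by simp
      -- transfer integrals to the product measure
      have htrans : ∀ (G : (∀ i, 𝒳 i) → ℝ),
          (∫ x, G x ∂Ppi) = ∫ z, G ((0 : Fin (N + 1)).insertNth z.1 z.2) ∂((ν 0).prod Ppi') := by
        intro G
        rw [← hmp.integral_comp (MeasurableEquiv.piFinSuccAbove 𝒳 0).measurableEmbedding]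
        congr 1
        funext x
        congr 1
        exact (Fin.insertNth_self_removeNth 0 x).symm
      set g : (∀ j, 𝒳 ((0 : Fin (N + 1)).succAbove j)) → ℝ :=
        fun y => ∫ x₀, F (x₀, y) ∂ν 0 with hg
      have hgmeas : Measurable g :=
        hFmeas.stronglyMeasurable.integral_prod_left'.measurable
      have hFyint : ∀ y, Integrable (fun x₀ => F (x₀, y)) (ν 0) := fun y =>
        mcd_integrable _ (hFmeas.comp (measurable_prodMk_right)) (fun x₀ => hFB _)
      have hgB : ∀ y, |g y| ≤ B := by
        intro y
        calc |g y| ≤ ∫ x₀, |F (x₀, y)| ∂ν 0 := mcd_abs_integral _ _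
        _ ≤ ∫ _x₀, B ∂ν 0 := integral_mono ((hFyint y).abs) (integrable_const B)
              (fun x₀ => hFB _)
        _ = B := by simp
      have hgbd : ∀ (j : Fin N) (y : ∀ j, 𝒳 ((0 : Fin (N + 1)).succAbove j))
          (v : 𝒳 ((0 : Fin (N + 1)).succAbove j)),
          |g y - g (Function.update y j v)| ≤ c ((0 : Fin (N + 1)).succAbove j) := by
        intro j y v
        rw [hg]
        rw [← integral_sub (hFyint y) (hFyint _)]
        calc |∫ x₀, (F (x₀, y) - F (x₀, Function.update y j v)) ∂ν 0|
            ≤ ∫ x₀, |F (x₀, y) - F (x₀, Function.update y j v)| ∂ν 0 :=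
              mcd_abs_integral _ _
        _ ≤ ∫ _x₀, c ((0 : Fin (N + 1)).succAbove j) ∂ν 0 := by
              apply integral_mono (((hFyint y).sub (hFyint _)).abs) (integrable_const _)
              intro x₀
              have := hbd ((0 : Fin (N + 1)).succAbove j)
                ((0 : Fin (N + 1)).insertNth x₀ y) v
              rw [mcd_insertNth_update] at this
              exact this
        _ = c ((0 : Fin (N + 1)).succAbove j) := by simp
      have hFprodint : Integrable F ((ν 0).prod Ppi') :=
        mcd_integrable _ hFmeas (fun z => hFB z)
      have hmg : ∫ y, g y ∂Ppi' = m := by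
        rw [hmdef, htrans f, integral_prod_symm _ hFprodint]
      -- Hoeffding step for each fixed y
      have hoef : ∀ y, ∫ x₀, Real.exp (t * (F (x₀, y) - g y)) ∂ν 0
          ≤ Real.exp (t ^ 2 * c 0 ^ 2 / 8) := by
        intro y
        set Y : 𝒳 0 → ℝ := fun x₀ => F (x₀, y) - g y with hY
        have hYmeas : Measurable Y := (hFmeas.comp measurable_prodMk_right).sub measurable_const
        have hbddb : BddBelow (Set.range Y) := by
          refine ⟨-(B + B), ?_⟩
          rintro _ ⟨x₀, rfl⟩
          have h1 := (abs_le.1 (hFB (x₀, y))).1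
          have h2 := (abs_le.1 (hgB y)).2
          simp only [hY]
          linarith
        set a := ⨅ x₀, Y x₀ with ha
        have hya : ∀ x₀, a ≤ Y x₀ := fun x₀ => ciInf_le hbddb x₀
        have hdiff : ∀ x₀ x₀', Y x₀ - c 0 ≤ Y x₀' := by
          intro x₀ x₀'
          have h := hbd 0 ((0 : Fin (N + 1)).insertNth x₀ y) x₀'
          rw [Fin.update_insertNth] at h
          have := (abs_le.1 h).2
          simp only [hY, hF]
          linarith
        have hyb : ∀ x₀, Y x₀ ≤ a + c 0 := by
          intro x₀
          have : Y x₀ - c 0 ≤ a := le_ciInf (hdiff x₀)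
          linarith
        have hY0 : ∫ x₀, Y x₀ ∂ν 0 = 0 := by
          rw [hY]
          rw [integral_sub (hFyint y) (integrable_const _)]
          simp [hg]
        have := mcd_hoeffding (ν 0) hYmeas
          (a := a) (b := a + c 0) (fun x₀ => ⟨hya x₀, hyb x₀⟩) hY0 t
        calc ∫ x₀, Real.exp (t * (F (x₀, y) - g y)) ∂ν 0
            = ∫ x₀, Real.exp (t * Y x₀) ∂ν 0 := rfl
        _ ≤ Real.exp (t ^ 2 * (a + c 0 - a) ^ 2 / 8) := this
        _ = Real.exp (t ^ 2 * c 0 ^ 2 / 8) := by ring_nf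
      -- main chain
      have hexpint : Integrable (fun z => Real.exp (t * (F z - m))) ((ν 0).prod Ppi') := by
        apply mcd_integrable _ (Real.measurable_exp.comp ((hFmeas.sub measurable_const).const_mul t))
          (K := Real.exp (|t| * (B + B)))
        intro z
        calc |Real.exp (t * (F z - m))| = Real.exp (t * (F z - m)) := Real.abs_exp _
        _ ≤ Real.exp (|t| * (B + B)) := by
              apply Real.exp_le_exp.2
              calc t * (F z - m) ≤ |t * (F z - m)| := le_abs_self _
              _ = |t| * |F z - m| := abs_mul _ _
              _ ≤ |t| * (B + B) := by
                    apply mul_le_mul_of_nonneg_left _ (abs_nonneg t)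
                    calc |F z - m| ≤ |F z| + |m| := abs_sub _ _
                    _ ≤ B + B := add_le_add (hFB z) hmB
      have hinner_eq : ∀ y, ∫ x₀, Real.exp (t * (F (x₀, y) - m)) ∂ν 0
          = Real.exp (t * (g y - m)) * ∫ x₀, Real.exp (t * (F (x₀, y) - g y)) ∂ν 0 := by
        intro y
        rw [← integral_const_mul]
        congr 1
        funext x₀
        rw [← Real.exp_add]
        congr 1
        ring
      have hint1 : Integrable (fun y => ∫ x₀, Real.exp (t * (F (x₀, y) - m)) ∂ν 0) Ppi' := by
        have := hexpint.swap
        exact this.integral_prod_left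
      have hint2 : Integrable
          (fun y => Real.exp (t * (g y - m)) * Real.exp (t ^ 2 * c 0 ^ 2 / 8)) Ppi' := by
        apply Integrable.mul_const
        apply mcd_integrable _ (Real.measurable_exp.comp ((hgmeas.sub measurable_const).const_mul t))
          (K := Real.exp (|t| * (B + B)))
        intro y
        calc |Real.exp (t * (g y - m))| = Real.exp (t * (g y - m)) := Real.abs_exp _
        _ ≤ Real.exp (|t| * (B + B)) := by
              apply Real.exp_le_exp.2
              calc t * (g y - m) ≤ |t * (g y - m)| := le_abs_self _
              _ = |t| * |g y - m| := abs_mul _ _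
              _ ≤ |t| * (B + B) := by
                    apply mul_le_mul_of_nonneg_left _ (abs_nonneg t)
                    calc |g y - m| ≤ |g y| + |m| := abs_sub _ _
                    _ ≤ B + B := add_le_add (hgB y) hmB
      have hIH := IH (fun j => 𝒳 ((0 : Fin (N + 1)).succAbove j)) (fun j => m𝒳 _)
        ν' (fun j => hν _) g hgmeas B hgB (fun j => c ((0 : Fin (N + 1)).succAbove j)) hgbd t
      rw [hmg] at hIH
      calc ∫ x, Real.exp (t * (f x - m)) ∂Ppi
          = ∫ z, Real.exp (t * (F z - m)) ∂((ν 0).prod Ppi') := htrans _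
      _ = ∫ y, ∫ x₀, Real.exp (t * (F (x₀, y) - m)) ∂ν 0 ∂Ppi' :=
            integral_prod_symm _ hexpint
      _ ≤ ∫ y, Real.exp (t * (g y - m)) * Real.exp (t ^ 2 * c 0 ^ 2 / 8) ∂Ppi' := by
            apply integral_mono hint1 hint2
            intro y
            exact (hinner_eq y).trans_le
              (mul_le_mul_of_nonneg_left (hoef y) (Real.exp_pos _).le)
      _ = Real.exp (t ^ 2 * c 0 ^ 2 / 8) * ∫ y, Real.exp (t * (g y - m)) ∂Ppi' := by
            rw [integral_mul_const, mul_comm]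
      _ ≤ Real.exp (t ^ 2 * c 0 ^ 2 / 8)
            * Real.exp (t ^ 2 * (∑ j, c ((0 : Fin (N + 1)).succAbove j) ^ 2) / 8) :=
            mul_le_mul_of_nonneg_left hIH (Real.exp_pos _).le
      _ = Real.exp (t ^ 2 * (∑ i, c i ^ 2) / 8) := by
            rw [← Real.exp_add]
            congr 1
            rw [Fin.sum_univ_succAbove (fun i => c i ^ 2) 0]
            ring

/-- McDiarmid's inequality: if `f` satisfies the bounded differences
condition with constants `c k ≥ 0` and `ξ₁,…,ξ_N` are independent random variables,
then `P(f(ξ) - E[f(ξ)] ≥ ε) ≤ exp(-2ε²/∑ c k²)` for every `ε > 0`. -/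
theorem mcdiarmid_inequality
    (N : ℕ) (𝒳 : Fin N → Type*) (m𝒳 : ∀ i, MeasurableSpace (𝒳 i))
    (f : (∀ i, 𝒳 i) → ℝ)
    (hfmeas : Measurable f)
    (c : Fin N → ℝ) (hc : ∀ i, 0 ≤ c i)
    (hbd : ∀ (i : Fin N) (x : ∀ j, 𝒳 j) (x' : 𝒳 i),
      |f x - f (Function.update x i x')| ≤ c i)
    (Ω : Type*) [MeasurableSpace Ω] (μ : Measure Ω) [IsProbabilityMeasure μ]
    (ξ : ∀ i, Ω → 𝒳 i) (hξmeas : ∀ i, Measurable (ξ i))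
    (hindep : iIndepFun (m := m𝒳) ξ μ)
    (hint : Integrable (fun ω => f (fun i => ξ i ω)) μ)
    (ε : ℝ) (hε : 0 < ε) :
    μ {ω | f (fun i => ξ i ω) - (∫ ω', f (fun i => ξ i ω') ∂μ) ≥ ε}
      ≤ ENNReal.ofReal (Real.exp (-2 * ε ^ 2 / ∑ i, (c i) ^ 2)) := by
  haveI : Nonempty Ω := mcd_nonempty μ
  obtain ⟨ω₀⟩ := ‹Nonempty Ω›
  set xref : ∀ i, 𝒳 i := fun i => ξ i ω₀ with hxref
  -- telescoping: f is bounded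
  have htel : ∀ (s : Finset (Fin N)) (x y : ∀ i, 𝒳 i),
      |f (s.piecewise y x) - f x| ≤ ∑ i ∈ s, c i := by
    intro s
    induction s using Finset.induction_on with
    | empty => intro x y; simp
    | insert _ _ hi =>
        rename_i i s IH2
        intro x y
        rw [Finset.piecewise_insert, Finset.sum_insert hi]
        set z := s.piecewise y x with hz
        calc |f (Function.update z i (y i)) - f x|
            ≤ |f (Function.update z i (y i)) - f z| + |f z - f x| := abs_sub_le _ _ _
        _ ≤ c i + ∑ j ∈ s, c j := add_le_add
              (by rw [abs_sub_comm]; exact hbd i z (y i)) (IH2 x y)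
  have hBbound : ∀ x, |f x| ≤ |f xref| + ∑ i, c i := by
    intro x
    have := htel Finset.univ xref x
    rw [Finset.piecewise_univ] at this
    calc |f x| ≤ |f x - f xref| + |f xref| := by
          have := abs_sub_le (f x) (f xref) 0
          simpa using this
    _ ≤ ∑ i, c i + |f xref| := add_le_add_left this _
    _ = |f xref| + ∑ i, c i := by ring
  set B : ℝ := |f xref| + ∑ i, c i with hB
  -- product measure
  set ν : ∀ i, Measure (𝒳 i) := fun i => μ.map (ξ i) with hν
  haveI : ∀ i, IsProbabilityMeasure (ν i) := fun i =>
    Measure.isProbabilityMeasure_map (hξmeas i).aemeasurable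
  set Φ : Ω → ∀ i, 𝒳 i := fun ω i => ξ i ω with hΦdef
  have hΦ : Measurable Φ := measurable_pi_iff.2 hξmeas
  have hmap : μ.map Φ = Measure.pi ν := by
    refine (Measure.pi_eq fun s hs => ?_).symm
    rw [Measure.map_apply hΦ (MeasurableSet.univ_pi hs)]
    have hpre : Φ ⁻¹' Set.univ.pi s = ⋂ i, ξ i ⁻¹' s i := by
      ext ω
      simp [Set.mem_univ_pi, hΦdef]
    rw [hpre]
    have hi := hindep.measure_inter_preimage_eq_mul (S := Finset.univ)
      (sets := s) (fun i _ => hs i)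
    simp only [Finset.mem_univ, Set.iInter_true] at hi
    rw [hi]
    exact Finset.prod_congr rfl fun i _ =>
      (Measure.map_apply (hξmeas i) (hs i)).symm
  set m : ℝ := ∫ ω', f (fun i => ξ i ω') ∂μ with hm
  have hmpi : m = ∫ y, f y ∂Measure.pi ν := by
    rw [hm, ← hmap, integral_map hΦ.aemeasurable hfmeas.aestronglyMeasurable]
  set X : Ω → ℝ := fun ω => f (fun i => ξ i ω) - m with hX
  have hXmeas : Measurable X := (hfmeas.comp hΦ).sub measurable_const
  have hmB : |m| ≤ B := by
    calc |m| ≤ ∫ ω', |f (fun i => ξ i ω')| ∂μ := mcd_abs_integral _ _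
    _ ≤ ∫ _ω', B ∂μ := integral_mono hint.abs (integrable_const B)
          (fun ω' => hBbound _)
    _ = B := by simp
  have hXB : ∀ ω, |X ω| ≤ B + B := fun ω => by
    calc |X ω| ≤ |f (fun i => ξ i ω)| + |m| := abs_sub _ _
    _ ≤ B + B := add_le_add (hBbound _) hmB
  set C : ℝ := ∑ i, c i ^ 2 with hC
  have hC0 : 0 ≤ C := Finset.sum_nonneg fun i _ => sq_nonneg _
  -- mgf bound for any t
  have hmgf : ∀ t : ℝ, ∫ ω, Real.exp (t * X ω) ∂μ ≤ Real.exp (t ^ 2 * C / 8) := by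
    intro t
    have hg2 : Measurable fun x : ∀ i, 𝒳 i => Real.exp (t * (f x - m)) :=
      Real.measurable_exp.comp ((hfmeas.sub measurable_const).const_mul t)
    have step : ∫ ω, Real.exp (t * X ω) ∂μ
        = ∫ x, Real.exp (t * (f x - ∫ y, f y ∂Measure.pi ν)) ∂Measure.pi ν := by
      calc ∫ ω, Real.exp (t * X ω) ∂μ
          = ∫ x, Real.exp (t * (f x - m)) ∂(μ.map Φ) :=
            (integral_map hΦ.aemeasurable hg2.aestronglyMeasurable).symm
      _ = ∫ x, Real.exp (t * (f x - m)) ∂(Measure.pi ν) := by rw [hmap]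
      _ = ∫ x, Real.exp (t * (f x - ∫ y, f y ∂Measure.pi ν)) ∂Measure.pi ν := by
            rw [← hmpi]
    rw [step]
    exact mcd_mgf_pi N 𝒳 m𝒳 ν (fun i => inferInstance) f hfmeas B hBbound c hbd t
  rcases eq_or_lt_of_le hC0 with hCz | hCpos
  · -- degenerate case: all c i = 0
    rw [← hCz]
    simp only [div_zero, Real.exp_zero, ENNReal.ofReal_one]
    exact prob_le_one
  · set t : ℝ := 4 * ε / C with ht
    have ht0 : 0 ≤ t := by positivity
    have hintexp : Integrable (fun ω => Real.exp (t * X ω)) μ :=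
      mcd_integrable μ (Real.measurable_exp.comp (hXmeas.const_mul t))
        (K := Real.exp (|t| * (B + B))) (fun ω => by
          calc |Real.exp (t * X ω)| = Real.exp (t * X ω) := Real.abs_exp _
          _ ≤ Real.exp (|t| * (B + B)) := Real.exp_le_exp.2 (by
                calc t * X ω ≤ |t * X ω| := le_abs_self _
                _ = |t| * |X ω| := abs_mul _ _
                _ ≤ |t| * (B + B) := mul_le_mul_of_nonneg_left (hXB ω) (abs_nonneg t)))
    have hchern := measure_ge_le_exp_mul_mgf (X := X) (μ := μ) ε ht0 hintexp
    have hmgfle : mgf X μ t ≤ Real.exp (t ^ 2 * C / 8) := hmgf t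
    calc μ {ω | f (fun i => ξ i ω) - m ≥ ε} = μ {ω | ε ≤ X ω} := rfl
    _ ≤ ENNReal.ofReal (Real.exp (-t * ε) * mgf X μ t) := by
          rw [ENNReal.le_ofReal_iff_toReal_le (measure_ne_top μ _)
            (mul_nonneg (Real.exp_pos _).le mgf_nonneg)]
          exact hchern
    _ ≤ ENNReal.ofReal (Real.exp (-t * ε) * Real.exp (t ^ 2 * C / 8)) :=
          ENNReal.ofReal_le_ofReal
            (mul_le_mul_of_nonneg_left hmgfle (Real.exp_pos _).le)
    _ = ENNReal.ofReal (Real.exp (-2 * ε ^ 2 / C)) := by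
          rw [← Real.exp_add]
          congr 2
          rw [ht]
          field_simp
          ring
end

section
/- Let H be the unit ball in a universal RKHS on a compact metric space X with continuous kernel k. Then for Borel probability measures p, q on X, MMD[H, p, q] = 0 if and only if p = q. -/
open MeasureTheory
open scoped NNReal ENNReal

/-- Gretton et al.: let `H` be a universal RKHS on a compact metric space
`X` (i.e. the inclusion `ι : H → C(X,ℝ)` has dense range in the sup norm) with continuous
kernel `k` (feature map `φ`, reproducing property `(ι f) x = ⟪f, φ x⟫`). Then for Borel
probability measures `p, q` on `X`, the MMD over the unit ball of `H` is zero if and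
only if `p = q`. -/
theorem universal_rkhs_mmd_zero_iff_eq
    (X : Type*) [MetricSpace X] [CompactSpace X] [MeasurableSpace X] [BorelSpace X]
    (H : Type*) [NormedAddCommGroup H] [InnerProductSpace ℝ H]
    (ι : H →ₗ[ℝ] C(X, ℝ))
    (huniversal : Dense (Set.range ι))
    (φ : X → H) (k : X → X → ℝ)
    (hk : ∀ x y, k x y = inner ℝ (φ x) (φ y))
    (hkcont : Continuous fun xy : X × X => k xy.1 xy.2)
    (hrepr : ∀ (f : H) (x : X), (ι f) x = inner ℝ f (φ x))
    (p q : Measure X) [IsProbabilityMeasure p] [IsProbabilityMeasure q] :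
    (⨆ f : {f : H // ‖f‖ ≤ 1}, (∫ x, (ι f.1) x ∂p - ∫ x, (ι f.1) x ∂q)) = 0 ↔ p = q := by
  -- integrability of continuous functions
  have hint : ∀ (g : C(X, ℝ)) (μ : Measure X) [IsProbabilityMeasure μ],
      Integrable (fun x => g x) μ := by
    intro g μ _
    exact g.continuous.integrable_of_hasCompactSupport
      (HasCompactSupport.of_compactSpace g)
  -- a uniform bound on ‖φ x‖
  obtain ⟨C, hC⟩ : ∃ C : ℝ, ∀ x : X, ‖φ x‖ ≤ C := by
    have hcont : Continuous fun x : X => Real.sqrt (k x x) := by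
      apply Real.continuous_sqrt.comp
      exact hkcont.comp (continuous_id.prodMk continuous_id)
    obtain ⟨C, hC⟩ := (isCompact_range hcont).bddAbove
    refine ⟨C, fun x => ?_⟩
    have h1 : Real.sqrt (k x x) = ‖φ x‖ := by
      rw [hk x x, real_inner_self_eq_norm_sq]
      exact Real.sqrt_sq (norm_nonneg _)
    have := hC ⟨x, rfl⟩
    rw [← h1]
    exact this
  -- pointwise bound on ι f for f in the unit ball
  have hbound : ∀ (f : H), ‖f‖ ≤ 1 → ∀ x : X, |(ι f) x| ≤ C := by
    intro f hf x
    rw [hrepr f x]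
    calc |inner ℝ f (φ x)| ≤ ‖f‖ * ‖φ x‖ := abs_real_inner_le_norm f (φ x)
      _ ≤ 1 * C := by
          apply mul_le_mul hf (hC x) (norm_nonneg _) zero_le_one
      _ = C := one_mul C
  -- bound on integrals
  have hintbd : ∀ (f : H), ‖f‖ ≤ 1 → ∀ (μ : Measure X) [IsProbabilityMeasure μ],
      |∫ x, (ι f) x ∂μ| ≤ C := by
    intro f hf μ _
    calc |∫ x, (ι f) x ∂μ| ≤ ∫ x, |(ι f) x| ∂μ := by
          simpa [Real.norm_eq_abs] using norm_integral_le_integral_norm (μ := μ) fun x => (ι f) x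
      _ ≤ ∫ _x, C ∂μ := by
          apply integral_mono ((hint (ι f) μ).abs) (integrable_const C)
          exact fun x => hbound f hf x
      _ = C := by simp
  constructor
  · intro hsup
    -- boundedness of the supremum family
    have hbdd : BddAbove (Set.range fun f : {f : H // ‖f‖ ≤ 1} =>
        (∫ x, (ι f.1) x ∂p - ∫ x, (ι f.1) x ∂q)) := by
      refine ⟨2 * C, ?_⟩
      rintro _ ⟨f, rfl⟩
      have h1 := hintbd f.1 f.2 p
      have h2 := hintbd f.1 f.2 q
      have := abs_sub (∫ x, (ι f.1) x ∂p) (∫ x, (ι f.1) x ∂q)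
      calc ∫ x, (ι f.1) x ∂p - ∫ x, (ι f.1) x ∂q
          ≤ |∫ x, (ι f.1) x ∂p - ∫ x, (ι f.1) x ∂q| := le_abs_self _
        _ ≤ |∫ x, (ι f.1) x ∂p| + |∫ x, (ι f.1) x ∂q| := abs_sub _ _
        _ ≤ C + C := add_le_add h1 h2
        _ = 2 * C := by ring
    -- each term is ≤ 0
    have hle : ∀ f : {f : H // ‖f‖ ≤ 1},
        (∫ x, (ι f.1) x ∂p - ∫ x, (ι f.1) x ∂q) ≤ 0 := by
      intro f
      have := le_ciSup hbdd f
      rwa [hsup] at this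
    -- hence each term equals 0 for f in the unit ball
    have heq1 : ∀ (f : H), ‖f‖ ≤ 1 → ∫ x, (ι f) x ∂p = ∫ x, (ι f) x ∂q := by
      intro f hf
      have h1 := hle ⟨f, hf⟩
      have hneg : ‖-f‖ ≤ 1 := by rwa [norm_neg]
      have h2 := hle ⟨-f, hneg⟩
      simp only [map_neg] at h2
      have hn : ∀ (μ : Measure X), ∫ x, (-(ι f)) x ∂μ = -∫ x, (ι f) x ∂μ := by
        intro μ
        simp only [ContinuousMap.neg_apply]
        exact integral_neg _
      rw [hn p, hn q] at h2
      linarith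
    -- extend by scaling to all of H
    have heq : ∀ (f : H), ∫ x, (ι f) x ∂p = ∫ x, (ι f) x ∂q := by
      intro f
      have hpos : (0:ℝ) < ‖f‖ + 1 := by positivity
      set c : ℝ := (‖f‖ + 1)⁻¹ with hc
      have hcpos : 0 < c := inv_pos.mpr hpos
      have hnorm : ‖c • f‖ ≤ 1 := by
        rw [norm_smul, Real.norm_eq_abs, abs_of_pos hcpos, hc]
        rw [inv_mul_le_iff₀ hpos, mul_one]
        linarith
      have h := heq1 (c • f) hnorm
      have hsm : ∀ (μ : Measure X), ∫ x, (ι (c • f)) x ∂μ = c * ∫ x, (ι f) x ∂μ := by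
        intro μ
        rw [LinearMap.map_smul]
        simp only [ContinuousMap.smul_apply, smul_eq_mul]
        exact integral_const_mul c _
      rw [hsm p, hsm q] at h
      exact mul_left_cancel₀ (ne_of_gt hcpos) h
    -- extend by density to all continuous functions
    have hcont_all : ∀ (g : C(X, ℝ)), ∫ x, g x ∂p = ∫ x, g x ∂q := by
      have hLip : ∀ (μ : Measure X) [IsProbabilityMeasure μ],
          Continuous fun g : C(X, ℝ) => ∫ x, g x ∂μ := by
        intro μ _
        apply Metric.continuous_iff.mpr
        intro g ε hε
        refine ⟨ε, hε, fun g' hgg' => ?_⟩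
        rw [Real.dist_eq, ← integral_sub (hint g' μ) (hint g μ)]
        calc |∫ x, (g' x - g x) ∂μ| ≤ ∫ x, |g' x - g x| ∂μ := by
              simpa [Real.norm_eq_abs] using norm_integral_le_integral_norm (μ := μ)
                fun x => g' x - g x
          _ ≤ ∫ _x, dist g' g ∂μ := by
              apply integral_mono ((hint g' μ).sub (hint g μ)).abs (integrable_const _)
              intro x
              simp only [Pi.sub_apply]
              rw [← Real.dist_eq]
              exact ContinuousMap.dist_apply_le_dist x
          _ = dist g' g := by simp
          _ < ε := hgg'
      have : Set.EqOn (fun g : C(X, ℝ) => ∫ x, g x ∂p)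
          (fun g : C(X, ℝ) => ∫ x, g x ∂q) (Set.range ι) := by
        rintro _ ⟨f, rfl⟩
        exact heq f
      have hall := Continuous.ext_on huniversal (hLip p) (hLip q) this
      intro g
      exact congrFun hall g
    -- conclude equality of measures via lintegrals of bounded continuous nonneg functions
    apply ext_of_forall_lintegral_eq_of_IsFiniteMeasure
    intro f
    have key : ∀ (μ : Measure X) [IsProbabilityMeasure μ],
        ∫ x, (f x : ℝ) ∂μ = (∫⁻ x, (f x : ℝ≥0∞) ∂μ).toReal := by
      intro μ _
      rw [integral_eq_lintegral_of_nonneg_ae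
        (Filter.Eventually.of_forall fun x => (f x).coe_nonneg)
        ((NNReal.continuous_coe.comp f.continuous).aestronglyMeasurable)]
      congr 1
      apply lintegral_congr
      intro x
      simp [ENNReal.ofReal_coe_nnreal]
    have hfin : ∀ (μ : Measure X) [IsProbabilityMeasure μ],
        ∫⁻ x, (f x : ℝ≥0∞) ∂μ ≠ ⊤ := by
      intro μ _
      obtain ⟨b, hb⟩ := (isCompact_range f.continuous).bddAbove
      have : ∫⁻ x, (f x : ℝ≥0∞) ∂μ ≤ ∫⁻ _, (b : ℝ≥0∞) ∂μ := by
        apply lintegral_mono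
        intro x
        exact ENNReal.coe_le_coe.mpr (hb ⟨x, rfl⟩)
      refine ne_of_lt (lt_of_le_of_lt this ?_)
      rw [lintegral_const]
      exact ENNReal.mul_lt_top ENNReal.coe_lt_top (measure_lt_top μ _)
    have h := hcont_all ⟨fun x => (f x : ℝ), NNReal.continuous_coe.comp f.continuous⟩
    simp only [ContinuousMap.coe_mk] at h
    rw [key p, key q] at h
    exact (ENNReal.toReal_eq_toReal_iff' (hfin p) (hfin q)).mp h
  · intro hpq
    subst hpq
    have : (fun f : {f : H // ‖f‖ ≤ 1} =>
        (∫ x, (ι f.1) x ∂p - ∫ x, (ι f.1) x ∂p)) = fun _ => (0:ℝ) := by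
      funext f; ring
    rw [this]
    have : Nonempty {f : H // ‖f‖ ≤ 1} := ⟨⟨0, by simp⟩⟩
    exact ciSup_const
end
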